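/- Let L, R, W be real m×m matrices with L symmetric and positive semidefinite, W skew-symmetric (Wᵀ = −W), and let C be a real n×m matrix. Assume there exist real numbers r > 0 and c > 0 such that ⟪x, R ⬝ x⟫ ≥ r · ‖x‖² and ‖C ⬝ x‖² ≤ c · ‖x‖² for all x ∈ ℝ^m. Suppose i : ℝ → ℝ^m is continuously differentiable (with arbitrary initial condition i(0)), v : ℝ → ℝ^n is continuous, and for every t the equation L ⬝ (deriv i t) = −R ⬝ (i t) + W ⬝ (i t) + Cᵀ ⬝ (v t) holds. Then for every t ≥ 0, ∫₀ᵗ ⟪C ⬝ (i τ), v τ⟫ dτ ≥ −(1/2) ⟪i 0, L ⬝ (i 0)⟫ + (r/c) · ∫₀ᵗ ‖C ⬝ (i τ)‖² dτ. -/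

import Mathlib

open MeasureTheory RealInnerProductSpace Matrix

/-- Matrix–vector multiplication viewed as a map between Euclidean spaces. -/
noncomputable def mulVecE {k l : ℕ} (M : Matrix (Fin k) (Fin l) ℝ)
    (x : EuclideanSpace ℝ (Fin l)) : EuclideanSpace ℝ (Fin k) :=
  (EuclideanSpace.equiv (Fin k) ℝ).symm (M.mulVec (EuclideanSpace.equiv (Fin l) ℝ x))

noncomputable def mulVecCLM {k l : ℕ} (M : Matrix (Fin k) (Fin l) ℝ) :
    EuclideanSpace ℝ (Fin l) →L[ℝ] EuclideanSpace ℝ (Fin k) :=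
  LinearMap.toContinuousLinearMap <|
    ((EuclideanSpace.equiv (Fin k) ℝ).symm.toLinearEquiv.toLinearMap.comp
      (M.mulVecLin.comp (EuclideanSpace.equiv (Fin l) ℝ).toLinearEquiv.toLinearMap))

lemma mulVecCLM_apply {k l : ℕ} (M : Matrix (Fin k) (Fin l) ℝ)
    (x : EuclideanSpace ℝ (Fin l)) : mulVecCLM M x = mulVecE M x := rfl

lemma inner_mulVecE {k l : ℕ} (M : Matrix (Fin k) (Fin l) ℝ)
    (x : EuclideanSpace ℝ (Fin k)) (y : EuclideanSpace ℝ (Fin l)) :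
    ⟪x, mulVecE M y⟫ = ⟪mulVecE Mᵀ x, y⟫ := by
  simp only [mulVecE, PiLp.inner_apply, RCLike.inner_apply, conj_trivial,
    EuclideanSpace.equiv, PiLp.continuousLinearEquiv_symm_apply,
    PiLp.continuousLinearEquiv_apply, PiLp.coe_continuousLinearEquiv, PiLp.coe_symm_continuousLinearEquiv, PiLp.toLp_apply,
    Matrix.mulVec, dotProduct, Matrix.transpose_apply, Finset.mul_sum, Finset.sum_mul]
  rw [Finset.sum_comm]
  refine Finset.sum_congr rfl fun a _ => Finset.sum_congr rfl fun b _ => ?_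
  ring

lemma mulVecE_neg {k l : ℕ} (M : Matrix (Fin k) (Fin l) ℝ)
    (x : EuclideanSpace ℝ (Fin l)) : mulVecE (-M) x = -mulVecE M x := by
  simp [mulVecE, Matrix.neg_mulVec]

/-- Dissipation inequality (eq. (20) in the proof of Theorem 1) for the RL
microgrid network dynamics `L i̇ = −R i + W i + Cᵀ v` with output `i_s = C i`
and arbitrary initial condition:
`∫₀ᵗ ⟪C (i τ), v τ⟫ dτ ≥ −(1/2)⟪i 0, L (i 0)⟫ + (r/c) ∫₀ᵗ ‖C (i τ)‖² dτ`. -/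
theorem stmt_3 {m n : ℕ}
    (L R W : Matrix (Fin m) (Fin m) ℝ) (C : Matrix (Fin n) (Fin m) ℝ)
    (hLsymm : Lᵀ = L) (hLpsd : L.PosSemidef) (hW : Wᵀ = -W)
    (r c : ℝ) (hr : 0 < r) (hc : 0 < c)
    (hR : ∀ x : EuclideanSpace ℝ (Fin m), r * ‖x‖ ^ 2 ≤ ⟪x, mulVecE R x⟫)
    (hC : ∀ x : EuclideanSpace ℝ (Fin m), ‖mulVecE C x‖ ^ 2 ≤ c * ‖x‖ ^ 2)
    (i : ℝ → EuclideanSpace ℝ (Fin m)) (v : ℝ → EuclideanSpace ℝ (Fin n))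
    (hi : ContDiff ℝ 1 i) (hv : Continuous v)
    (hdyn : ∀ t : ℝ, mulVecE L (deriv i t) =
      -(mulVecE R (i t)) + mulVecE W (i t) + mulVecE Cᵀ (v t)) :
    ∀ t : ℝ, 0 ≤ t →
      (∫ τ in (0:ℝ)..t, ⟪mulVecE C (i τ), v τ⟫) ≥
        -((1/2 : ℝ) * ⟪i 0, mulVecE L (i 0)⟫) +
          (r / c) * ∫ τ in (0:ℝ)..t, ‖mulVecE C (i τ)‖ ^ 2 := by
  intro t ht
  have hic : Continuous i := hi.continuous
  have hIt : ∀ s : ℝ, HasDerivAt i (deriv i s) s := fun s =>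
    (hi.differentiable one_ne_zero s).hasDerivAt
  set g : ℝ → ℝ := fun s => (1/2 : ℝ) * ⟪i s, mulVecE L (i s)⟫ with hgdef
  -- skew term vanishes
  have hWzero : ∀ x : EuclideanSpace ℝ (Fin m), ⟪x, mulVecE W x⟫ = 0 := by
    intro x
    have h1 : ⟪x, mulVecE W x⟫ = -⟪x, mulVecE W x⟫ := by
      calc ⟪x, mulVecE W x⟫ = ⟪mulVecE Wᵀ x, x⟫ := inner_mulVecE W x x
        _ = -⟪mulVecE W x, x⟫ := by rw [hW, mulVecE_neg, inner_neg_left]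
        _ = -⟪x, mulVecE W x⟫ := by rw [real_inner_comm]
    linarith
  -- derivative of g
  have hg : ∀ s : ℝ, HasDerivAt g
      (⟪mulVecE C (i s), v s⟫ - ⟪i s, mulVecE R (i s)⟫) s := by
    intro s
    have hLi : HasDerivAt (fun u => mulVecE L (i u)) (mulVecE L (deriv i s)) s := by
      exact ((mulVecCLM L).hasFDerivAt.comp_hasDerivAt s (hIt s))
    have h := ((hIt s).inner ℝ hLi).const_mul (1/2 : ℝ)
    have hsym : ⟪deriv i s, mulVecE L (i s)⟫ = ⟪i s, mulVecE L (deriv i s)⟫ := by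
      rw [inner_mulVecE, hLsymm, real_inner_comm]
    have hCT : ⟪i s, mulVecE Cᵀ (v s)⟫ = ⟪mulVecE C (i s), v s⟫ := by
      rw [inner_mulVecE Cᵀ (i s) (v s), Matrix.transpose_transpose]
    have hval : (1/2 : ℝ) * (⟪i s, mulVecE L (deriv i s)⟫ + ⟪deriv i s, mulVecE L (i s)⟫)
        = ⟪mulVecE C (i s), v s⟫ - ⟪i s, mulVecE R (i s)⟫ := by
      rw [hsym]
      rw [show ⟪i s, mulVecE L (deriv i s)⟫
          = -⟪i s, mulVecE R (i s)⟫ + ⟪i s, mulVecE W (i s)⟫ + ⟪i s, mulVecE Cᵀ (v s)⟫ by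
        rw [hdyn s, inner_add_right, inner_add_right, inner_neg_right]]
      simp only [hWzero, hCT]
      ring
    rw [hgdef, ← hval]
    exact h
  -- continuity facts
  have hcC : Continuous fun τ => mulVecE C (i τ) := by
    exact ((mulVecCLM C).continuous.comp hic)
  have hcont1 : Continuous fun τ => ⟪mulVecE C (i τ), v τ⟫ := hcC.inner hv
  have hcont2 : Continuous fun τ => ‖mulVecE C (i τ)‖ ^ 2 := (hcC.norm).pow 2
  have hcontR : Continuous fun τ => ⟪i τ, mulVecE R (i τ)⟫ := by
    refine hic.inner ?_
    exact ((mulVecCLM R).continuous.comp hic)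
  -- FTC
  have hftc : ∫ τ in (0:ℝ)..t, (⟪mulVecE C (i τ), v τ⟫ - ⟪i τ, mulVecE R (i τ)⟫)
      = g t - g 0 :=
    intervalIntegral.integral_eq_sub_of_hasDerivAt (fun τ _ => hg τ)
      ((hcont1.sub hcontR).intervalIntegrable 0 t)
  -- pointwise inequality
  have hpt : ∀ τ : ℝ, ⟪mulVecE C (i τ), v τ⟫ - ⟪i τ, mulVecE R (i τ)⟫
      ≤ ⟪mulVecE C (i τ), v τ⟫ - (r/c) * ‖mulVecE C (i τ)‖ ^ 2 := by
    intro τ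
    have h1 : (r/c) * ‖mulVecE C (i τ)‖ ^ 2 ≤ (r/c) * (c * ‖i τ‖ ^ 2) :=
      mul_le_mul_of_nonneg_left (hC (i τ)) (le_of_lt (div_pos hr hc))
    have h2 : (r/c) * (c * ‖i τ‖ ^ 2) = r * ‖i τ‖ ^ 2 := by
      rw [← mul_assoc, div_mul_cancel₀ _ hc.ne']
    have := hR (i τ)
    linarith
  -- integral inequality
  have hmono : g t - g 0 ≤ ∫ τ in (0:ℝ)..t,
      (⟪mulVecE C (i τ), v τ⟫ - (r/c) * ‖mulVecE C (i τ)‖ ^ 2) := by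
    rw [← hftc]
    exact intervalIntegral.integral_mono_on ht
      ((hcont1.sub hcontR).intervalIntegrable 0 t)
      ((hcont1.sub (continuous_const.mul hcont2)).intervalIntegrable 0 t)
      (fun τ _ => hpt τ)
  have hsplit : ∫ τ in (0:ℝ)..t,
      (⟪mulVecE C (i τ), v τ⟫ - (r/c) * ‖mulVecE C (i τ)‖ ^ 2)
      = (∫ τ in (0:ℝ)..t, ⟪mulVecE C (i τ), v τ⟫)
        - (r/c) * ∫ τ in (0:ℝ)..t, ‖mulVecE C (i τ)‖ ^ 2 := by
    rw [intervalIntegral.integral_sub (g := fun τ => (r/c) * ‖mulVecE C (i τ)‖ ^ 2) (hcont1.intervalIntegrable 0 t)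
      ((continuous_const.mul hcont2).intervalIntegrable 0 t),
      intervalIntegral.integral_const_mul]
  -- g t ≥ 0
  have hgt0 : 0 ≤ g t := by
    have heq : ⟪i t, mulVecE L (i t)⟫
        = dotProduct (star ((EuclideanSpace.equiv (Fin m) ℝ) (i t)))
          (L.mulVec ((EuclideanSpace.equiv (Fin m) ℝ) (i t))) := by
      simp [mulVecE, PiLp.inner_apply, dotProduct, EuclideanSpace.equiv, mul_comm]
    have h2 := hLpsd.dotProduct_mulVec_nonneg ((EuclideanSpace.equiv (Fin m) ℝ) (i t))
    show 0 ≤ (1/2 : ℝ) * ⟪i t, mulVecE L (i t)⟫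
    rw [heq]
    exact mul_nonneg (by norm_num) (by simpa using h2)
  have hg0 : g 0 = (1/2 : ℝ) * ⟪i 0, mulVecE L (i 0)⟫ := rfl
  rw [hsplit] at hmono
  rw [ge_iff_le]
  linarith
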